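/- Let n ≥ 3 and suppose α₁, …, αₙ ∈ [π/2, π) satisfy α₁ + ⋯ + αₙ = (n−2)π. Then ∑ᵢ tan(αᵢ/2) ≥ n·cot(π/n), with equality if and only if every αᵢ equals (n−2)π/n. -/

import Mathlib

open Real Set

lemma strictConvexOn_tan_Ico : StrictConvexOn ℝ (Ico 0 (π/2)) Real.tan := by
  have hsub : Ico (0:ℝ) (π/2) ⊆ {x | Real.cos x ≠ 0} := by
    intro x hx
    exact (Real.cos_pos_of_mem_Ioo ⟨by linarith [hx.1, Real.pi_pos], hx.2⟩).ne'
  apply StrictMonoOn.strictConvexOn_of_deriv (convex_Ico _ _)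
    (Real.continuousOn_tan.mono hsub)
  rw [interior_Ico]
  intro x hx y hy hxy
  rw [Real.deriv_tan, Real.deriv_tan]
  have hcx : 0 < Real.cos x := Real.cos_pos_of_mem_Ioo ⟨by linarith [hx.1, Real.pi_pos], hx.2⟩
  have hcy : 0 < Real.cos y := Real.cos_pos_of_mem_Ioo ⟨by linarith [hy.1, Real.pi_pos], hy.2⟩
  have : Real.cos y < Real.cos x :=
    Real.cos_lt_cos_of_nonneg_of_le_pi hx.1.le (by linarith [Real.pi_pos, hy.2]) hxy
  have h2 : Real.cos y ^ 2 < Real.cos x ^ 2 := by nlinarith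
  rw [div_lt_div_iff₀ (by positivity) (by positivity)]
  nlinarith

lemma tan_tangent_line_lt {c x : ℝ} (hc : c ∈ Ico 0 (π/2)) (hx : x ∈ Ico 0 (π/2))
    (hne : x ≠ c) :
    Real.tan c + deriv Real.tan c * (x - c) < Real.tan x := by
  have hdiff : DifferentiableAt ℝ Real.tan c :=
    Real.differentiableAt_tan.2
      (Real.cos_pos_of_mem_Ioo ⟨by linarith [hc.1, Real.pi_pos], hc.2⟩).ne'
  rcases lt_or_gt_of_ne hne with h | h
  · have := strictConvexOn_tan_Ico.slope_lt_deriv hx hc h hdiff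
    rw [slope_def_field, div_lt_iff₀ (by linarith : (0:ℝ) < c - x)] at this
    nlinarith
  · have := strictConvexOn_tan_Ico.deriv_lt_slope hc hx h hdiff
    rw [slope_def_field, lt_div_iff₀ (by linarith : (0:ℝ) < x - c)] at this
    nlinarith

theorem tan_half_sum_ge_ngon (n : ℕ) (hn : 3 ≤ n) (α : Fin n → ℝ)
    (hα : ∀ i, Real.pi / 2 ≤ α i ∧ α i < Real.pi)
    (hsum : ∑ i, α i = (n - 2 : ℝ) * Real.pi) :
    (n : ℝ) * Real.cot (Real.pi / n) ≤ ∑ i, Real.tan (α i / 2) ∧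
      (∑ i, Real.tan (α i / 2) = (n : ℝ) * Real.cot (Real.pi / n) ↔
        ∀ i, α i = (n - 2 : ℝ) * Real.pi / n) := by
  have hn0 : (n : ℝ) ≠ 0 := by positivity
  have hn3 : (3 : ℝ) ≤ n := by exact_mod_cast hn
  set c : ℝ := π / 2 - π / n with hc_def
  have hpi := Real.pi_pos
  have hπn : 0 < π / n := by positivity
  have hπn2 : π / n ≤ π / 2 := by
    apply div_le_div_of_nonneg_left hpi.le (by norm_num) (by linarith)
  have hcmem : c ∈ Ico 0 (π/2) := ⟨by simp [hc_def]; linarith, by simp [hc_def]; positivity⟩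
  have htc : Real.tan c = Real.cot (π / n) := by
    rw [hc_def, Real.tan_eq_sin_div_cos, Real.cot_eq_cos_div_sin,
      Real.sin_pi_div_two_sub, Real.cos_pi_div_two_sub]
  have h2c : (n - 2 : ℝ) * π / n = 2 * c := by
    rw [hc_def]; field_simp
  have hxmem : ∀ i, α i / 2 ∈ Ico 0 (π/2) := fun i =>
    ⟨by linarith [(hα i).1], by linarith [(hα i).2]⟩
  set d : ℝ := deriv Real.tan c with hd_def
  -- pointwise bound
  have key : ∀ i, Real.tan c + d * (α i / 2 - c) ≤ Real.tan (α i / 2) := by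
    intro i
    rcases eq_or_ne (α i / 2) c with h | h
    · rw [h]; simp
    · exact (tan_tangent_line_lt hcmem (hxmem i) h).le
  -- sum of the linear lower bounds
  have hlin : ∑ i, (Real.tan c + d * (α i / 2 - c)) = (n : ℝ) * Real.cot (π / n) := by
    have h0 : ∑ i, (α i / 2 - c) = 0 := by
      rw [Finset.sum_sub_distrib, ← Finset.sum_div, hsum, Finset.sum_const,
        Finset.card_univ, Fintype.card_fin, nsmul_eq_mul, hc_def]
      field_simp; ring
    rw [Finset.sum_add_distrib, ← Finset.mul_sum, h0, Finset.sum_const,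
      Finset.card_univ, Fintype.card_fin, nsmul_eq_mul, htc]
    ring
  have hle : (n : ℝ) * Real.cot (π / n) ≤ ∑ i, Real.tan (α i / 2) := by
    rw [← hlin]; exact Finset.sum_le_sum fun i _ => key i
  refine ⟨hle, ⟨?_, ?_⟩⟩
  · intro heq
    by_contra hcon
    push_neg at hcon
    obtain ⟨j, hj⟩ := hcon
    have hjne : α j / 2 ≠ c := by
      intro h; apply hj; rw [h2c]; linear_combination 2 * h
    have : ∑ i, (Real.tan c + d * (α i / 2 - c)) < ∑ i, Real.tan (α i / 2) :=
      Finset.sum_lt_sum (fun i _ => key i)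
        ⟨j, Finset.mem_univ j, tan_tangent_line_lt hcmem (hxmem j) hjne⟩
    rw [hlin, heq] at this
    exact lt_irrefl _ this
  · intro hall
    have : ∀ i, Real.tan (α i / 2) = Real.cot (π / n) := by
      intro i
      rw [hall i, h2c, ← htc]
      norm_num
    rw [Finset.sum_congr rfl fun i _ => this i, Finset.sum_const, Finset.card_univ,
      Fintype.card_fin, nsmul_eq_mul]
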